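/- Let q be an odd prime power, let F_q be a finite field with q elements, and let n ≥ 1. Then the order of a Sylow 2-subgroup of the general linear group GL_n(F_q) (equivalently, the largest power of 2 dividing |GL_n(F_q)|) equals ((q − 1)_2)^{⌈n/2⌉} * ((q^2 − 1)_2)^{⌊n/2⌋} * (⌊n/2⌋!)_2. -/

import Mathlib

/-- `twoPart m` is the largest power of `2` dividing `m`, i.e. `2 ^ ν₂(m)`. -/
def twoPart (m : ℕ) : ℕ := 2 ^ (m.factorization 2)


lemma stmt5_conv (N : ℕ) (hN : 0 < N) : ((N.factorization 2 : ℕ∞)) = emultiplicity (2:ℤ) (N:ℤ) := by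
  rw [Nat.factorization_def _ Nat.prime_two, padicValNat_eq_emultiplicity hN.ne']
  exact_mod_cast (Int.natCast_emultiplicity 2 N).symm

lemma stmt5_oddcase (q k : ℕ) (hq : 2 ≤ q) (hqodd : Odd q) (hk : Odd k) :
    (q ^ k - 1).factorization 2 = (q - 1).factorization 2 := by
  have hk0 : k ≠ 0 := by rintro rfl; simp [Nat.odd_iff] at hk
  have hqk : 2 ≤ q ^ k := le_trans hq (Nat.le_self_pow hk0 q)
  have h1 : 0 < q ^ k - 1 := by omega
  have h2 : 0 < q - 1 := by omega
  have key : emultiplicity (2:ℤ) ((q:ℤ)^k - 1) = emultiplicity (2:ℤ) ((q:ℤ) - 1) := by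
    have hgeom : ((q:ℤ) - 1) * (∑ i ∈ Finset.range k, (q:ℤ)^i) = (q:ℤ)^k - 1 := by
      rw [mul_comm]; simpa using geom_sum_mul (q:ℤ) k
    have hSodd : ¬ (2:ℤ) ∣ (∑ i ∈ Finset.range k, (q:ℤ)^i) := by
      intro hdvd
      have hdvd2 : ((∑ i ∈ Finset.range k, (q:ℤ)^i : ℤ) : ZMod 2) = 0 :=
        (ZMod.intCast_zmod_eq_zero_iff_dvd _ 2).mpr (by exact_mod_cast hdvd)
      push_cast at hdvd2
      obtain ⟨j, rfl⟩ := hqodd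
      obtain ⟨m, rfl⟩ := hk
      have h20 : (2 : ZMod 2) = 0 := rfl
      push_cast [h20] at hdvd2
      simp [h20] at hdvd2
    rw [← hgeom, emultiplicity_mul Int.prime_two, emultiplicity_eq_zero.mpr hSodd, add_zero]
  have e1 := stmt5_conv (q^k - 1) h1
  have e2 := stmt5_conv (q - 1) h2
  rw [Nat.cast_sub (by omega), Nat.cast_pow, Nat.cast_one] at e1
  rw [Nat.cast_sub (by omega), Nat.cast_one] at e2
  have := e1.trans (key.trans e2.symm)
  exact_mod_cast this

lemma stmt5_evencase (q m : ℕ) (hq : 2 ≤ q) (hqodd : Odd q) (hm : m ≠ 0) :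
    (q ^ (2 * m) - 1).factorization 2 =
      (q ^ 2 - 1).factorization 2 + m.factorization 2 := by
  have hqk : 2 ≤ q ^ (2 * m) := le_trans hq (Nat.le_self_pow (by omega) q)
  have hq2 : 2 ≤ q ^ 2 := le_trans hq (Nat.le_self_pow (by omega) q)
  have h1 : 0 < q ^ (2 * m) - 1 := by omega
  have h2 : 0 < q ^ 2 - 1 := by omega
  have hdvd4 : (4:ℤ) ∣ (q:ℤ)^2 - 1 := by
    obtain ⟨j, rfl⟩ := hqodd
    push_cast
    ring_nf
    exact ⟨j + j^2, by ring⟩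
  have hx : ¬ (2:ℤ) ∣ (q:ℤ)^2 := by
    have hodd : Odd ((q:ℤ)^2) := (Int.odd_coe_nat q |>.mpr hqodd).pow
    rw [← Int.not_even_iff_odd] at hodd
    rwa [even_iff_two_dvd] at hodd
  have key := Int.two_pow_sub_pow' (x := (q:ℤ)^2) (y := 1) m hdvd4 hx
  simp only [one_pow, ← pow_mul] at key
  have e1 := stmt5_conv (q ^ (2*m) - 1) h1
  have e2 := stmt5_conv (q ^ 2 - 1) h2
  have e3 : ((m.factorization 2 : ℕ∞)) = emultiplicity (2:ℤ) (m:ℤ) :=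
    stmt5_conv m (Nat.pos_of_ne_zero hm)
  rw [Nat.cast_sub (by omega), Nat.cast_pow, Nat.cast_one] at e1
  rw [Nat.cast_sub (by omega), Nat.cast_pow, Nat.cast_one] at e2
  have final : (((q ^ (2*m) - 1).factorization 2 : ℕ∞)) =
      (((q ^ 2 - 1).factorization 2 + m.factorization 2 : ℕ) : ℕ∞) := by
    rw [e1, Nat.cast_add, e2, e3]; exact key
  exact_mod_cast final


lemma stmt5_sumval (q : ℕ) (hq : 2 ≤ q) (hqodd : Odd q) (n : ℕ) :
    ∑ k ∈ Finset.range n, (q ^ (k + 1) - 1).factorization 2 =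
      (q - 1).factorization 2 * ((n + 1) / 2) +
        (q ^ 2 - 1).factorization 2 * (n / 2) +
        ((n / 2).factorial).factorization 2 := by
  induction n with
  | zero => simp
  | succ n ih =>
    rw [Finset.sum_range_succ, ih]
    rcases Nat.even_or_odd (n + 1) with he | ho
    · obtain ⟨m, hm⟩ := he
      obtain ⟨t, rfl⟩ : ∃ t, m = t + 1 := ⟨m - 1, by omega⟩
      have hterm : (q ^ (n + 1) - 1).factorization 2
          = (q ^ 2 - 1).factorization 2 + (t + 1).factorization 2 := by
        rw [show n + 1 = 2 * (t + 1) by omega]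
        exact stmt5_evencase q (t + 1) hq hqodd (by omega)
      have h1 : (n + 1 + 1) / 2 = t + 1 := by omega
      have h2 : (n + 1) / 2 = t + 1 := by omega
      have h3 : n / 2 = t := by omega
      rw [hterm, h1, h2, h3, Nat.factorial_succ,
        Nat.factorization_mul (by omega) (Nat.factorial_ne_zero _)]
      simp only [Finsupp.add_apply]
      ring
    · obtain ⟨s, hs⟩ := ho
      rw [stmt5_oddcase q (n + 1) hq hqodd ⟨s, hs⟩]
      have h1 : (n + 1 + 1) / 2 = (n + 1) / 2 + 1 := by omega
      have h2 : (n + 1) / 2 = n / 2 := by omega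
      rw [h1, h2]
      ring



/-- If `q` is an odd prime power and `F` is a field with `q` elements, then the order
of a Sylow `2`-subgroup of `GL_n(F)` equals
`((q - 1)_2)^⌈n/2⌉ * ((q^2 - 1)_2)^⌊n/2⌋ * (⌊n/2⌋!)_2`. -/
theorem stmt5 (q n : ℕ) (hq : IsPrimePow q) (hqodd : Odd q) (hn : 1 ≤ n)
    (F : Type*) [Field F] [Fintype F] (hF : Fintype.card F = q)
    (P : Sylow 2 (Matrix.GeneralLinearGroup (Fin n) F)) :
    Nat.card ↥(P : Subgroup (Matrix.GeneralLinearGroup (Fin n) F)) =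
      twoPart (q - 1) ^ ((n + 1) / 2) * twoPart (q ^ 2 - 1) ^ (n / 2) *
        twoPart (Nat.factorial (n / 2)) := by
  have hq2 : 2 ≤ q := hq.two_le
  have hcard : Nat.card (Matrix.GeneralLinearGroup (Fin n) F) =
      ∏ i : Fin n, (q ^ n - q ^ (i : ℕ)) := by
    rw [← hF]
    exact Matrix.card_GL_field n
  have key : (Nat.card (Matrix.GeneralLinearGroup (Fin n) F)).factorization 2 =
      (q - 1).factorization 2 * ((n + 1) / 2) +
        (q ^ 2 - 1).factorization 2 * (n / 2) +
        ((n / 2).factorial).factorization 2 := by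
    rw [hcard]
    have hodd2 : q % 2 = 1 := Nat.odd_iff.mp hqodd
    have hfact : ∀ i, i < n → (q ^ n - q ^ i).factorization 2 =
        (q ^ (n - i) - 1).factorization 2 := by
      intro i hi
      have hsplit : q ^ n - q ^ i = q ^ i * (q ^ (n - i) - 1) := by
        rw [Nat.mul_sub, mul_one, ← pow_add]
        congr 2
        omega
      have hlt : q ^ (n - i) ≥ 2 := le_trans hq2 (Nat.le_self_pow (by omega) q)
      rw [hsplit, Nat.factorization_mul (by positivity) (by omega)]
      simp only [Finsupp.add_apply]
      have hz : (q ^ i).factorization 2 = 0 := by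
        apply Nat.factorization_eq_zero_of_not_dvd
        intro hdvd
        have h2q : 2 ∣ q := (Nat.prime_two.dvd_of_dvd_pow hdvd)
        omega
      omega
    rw [Nat.factorization_prod (fun i _ => by
      have hi : (i : ℕ) < n := i.2
      have : q ^ (i:ℕ) < q ^ n := Nat.pow_lt_pow_right (by omega) hi
      omega)]
    simp only [Finsupp.finset_sum_apply]
    calc ∑ i : Fin n, (q ^ n - q ^ (i:ℕ)).factorization 2
        = ∑ i ∈ Finset.range n, (q ^ (n - i) - 1).factorization 2 := by
          rw [← Finset.sum_range fun i => (q ^ n - q ^ i).factorization 2]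
          exact Finset.sum_congr rfl fun i hi => hfact i (Finset.mem_range.mp hi)
      _ = ∑ k ∈ Finset.range n, (q ^ (k + 1) - 1).factorization 2 := by
          rw [← Finset.sum_range_reflect]
          exact Finset.sum_congr rfl fun j hj => by
            have hj' := Finset.mem_range.mp hj
            rw [show n - (n - 1 - j) = j + 1 by omega]
      _ = _ := stmt5_sumval q hq2 hqodd n
  rw [Sylow.card_eq_multiplicity P, key]
  simp only [twoPart]
  rw [pow_add, pow_add, pow_mul, pow_mul]
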